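/- Let A be an n×n real symmetric matrix and let |A| denote the unique positive semidefinite square root of A². Then for every n×n real symmetric matrix X, the matrix AXA is majorized by |A| X |A|. -/

import Mathlib

open Matrix

/-- `v` is majorized by `w`: for every `k`, the sum of the `k` largest entries of `v`
is at most the sum of the `k` largest entries of `w`, with equality for `k = n`.
Stated equivalently: every subset sum of `v` is dominated by some subset sum of `w`
of the same cardinality, and the total sums agree. -/
def VecMajorizedBy {ι : Type*} [Fintype ι] (v w : ι → ℝ) : Prop :=
  (∀ s : Finset ι, ∃ t : Finset ι, t.card = s.card ∧ ∑ i ∈ s, v i ≤ ∑ i ∈ t, w i) ∧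
    ∑ i, v i = ∑ i, w i

/-- `X` is majorized by `Y`: both are (real) symmetric and the eigenvalue vector of `X`
is majorized by the eigenvalue vector of `Y`. -/
def MatMajorizedBy {ι : Type*} [Fintype ι] [DecidableEq ι]
    (X Y : Matrix ι ι ℝ) : Prop :=
  ∃ (hX : X.IsHermitian) (hY : Y.IsHermitian),
    VecMajorizedBy hX.eigenvalues hY.eigenvalues

section Aux
open Polynomial
variable {m R : Type*} [Fintype m] [DecidableEq m] [CommRing R]

lemma my_charpoly_mul_conj (P Q M : Matrix m m R) (hPQ : P * Q = 1) :
    (P * M * Q).charpoly = M.charpoly := by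
  classical
  set C' := (C : R →+* R[X])
  have hPQ' : P.map C' * Q.map C' = 1 := by
    rw [← Matrix.map_mul, hPQ]; simp [C']
  have key : charmatrix (P * M * Q) = P.map C' * charmatrix M * Q.map C' := by
    rw [charmatrix, charmatrix]
    rw [Matrix.mul_sub, Matrix.sub_mul]
    congr 1
    · rw [mul_assoc, scalar_commute (X : R[X]) (Commute.all _) (Q.map C'), ← mul_assoc, hPQ',
        one_mul]
    · simp [RingHom.mapMatrix_apply, ← Matrix.map_mul, C']
  rw [charpoly, charpoly, key, det_mul, det_mul, mul_comm ((P.map ⇑C').det), mul_assoc,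
    ← det_mul, hPQ', det_one, mul_one]

lemma my_charpoly_diagonal (d : m → R) :
    (diagonal d).charpoly = ∏ i, (X - C (d i)) := by
  have h : charmatrix (diagonal d) = diagonal fun i => (X : R[X]) - C (d i) := by
    ext i j
    by_cases h : i = j
    · subst h; simp [charmatrix_apply, diagonal_apply_eq]
    · simp [charmatrix_apply, diagonal_apply_ne _ h]
  rw [charpoly, h, det_diagonal]

lemma my_roots_eq {N : ℕ} (M : Matrix (Fin N) (Fin N) ℝ) (hM : M.IsHermitian) :
    M.charpoly.roots = Multiset.map hM.eigenvalues Finset.univ.val := by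
  have hsp := hM.spectral_theorem
  rw [RCLike.ofReal_real_eq_id] at hsp
  simp only [Function.id_comp] at hsp
  have hU : (hM.eigenvectorUnitary : Matrix (Fin N) (Fin N) ℝ) *
      star (hM.eigenvectorUnitary : Matrix (Fin N) (Fin N) ℝ) = 1 :=
    Matrix.mem_unitaryGroup_iff.mp hM.eigenvectorUnitary.2
  have h1 : M.charpoly = (diagonal hM.eigenvalues).charpoly := by
    conv_lhs => rw [hsp]
    exact my_charpoly_mul_conj _ _ _ hU
  rw [h1, my_charpoly_diagonal]
  have h2 : (∏ i, ((X : ℝ[X]) - C (hM.eigenvalues i))) =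
      ((Multiset.map hM.eigenvalues Finset.univ.val).map fun a => (X : ℝ[X]) - C a).prod := by
    rw [Multiset.map_map]; rfl
  rw [h2, roots_multiset_prod_X_sub_C]

lemma my_exists_perm {N : ℕ} {v w : Fin N → ℝ}
    (h : Multiset.map v Finset.univ.val = Multiset.map w Finset.univ.val) :
    ∃ σ : Equiv.Perm (Fin N), v = w ∘ σ := by
  have coeEq : ∀ f : Fin N → ℝ,
      (↑(List.ofFn f) : Multiset ℝ) = Multiset.map f Finset.univ.val := by
    intro f
    rw [List.ofFn_eq_map, ← Multiset.map_coe]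
    rfl
  have permEq : ∀ (f : Fin N → ℝ) (τ : Equiv.Perm (Fin N)),
      Multiset.map (f ∘ τ) Finset.univ.val = Multiset.map f Finset.univ.val := by
    intro f τ
    rw [← coeEq, ← coeEq]
    exact Quot.sound (Equiv.Perm.ofFn_comp_perm τ f)
  have hperm : List.Perm (List.ofFn (v ∘ Tuple.sort v)) (List.ofFn (w ∘ Tuple.sort w)) := by
    rw [← Multiset.coe_eq_coe, coeEq, coeEq, permEq, permEq, h]
  have heq : List.ofFn (v ∘ Tuple.sort v) = List.ofFn (w ∘ Tuple.sort w) :=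
    List.Perm.eq_of_sortedLE
      (List.sortedLE_ofFn_iff.mpr (Tuple.monotone_sort v))
      (List.sortedLE_ofFn_iff.mpr (Tuple.monotone_sort w)) hperm
  have heq' : v ∘ Tuple.sort v = w ∘ Tuple.sort w := List.ofFn_injective heq
  refine ⟨(Tuple.sort v)⁻¹.trans (Tuple.sort w), ?_⟩
  funext i
  have := congrFun heq' ((Tuple.sort v)⁻¹ i)
  simpa using this

lemma my_vecMaj_of_perm {ι : Type*} [Fintype ι] [DecidableEq ι] {v w : ι → ℝ}
    (σ : Equiv.Perm ι) (h : v = w ∘ σ) : VecMajorizedBy v w := by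
  constructor
  · intro s
    refine ⟨s.image σ, Finset.card_image_of_injective s σ.injective, le_of_eq ?_⟩
    rw [Finset.sum_image (fun a _ b _ hab => σ.injective hab), h]
    rfl
  · rw [h]
    exact Equiv.sum_comp σ w

end Aux

/-- For a real symmetric `A` with `|A|` the (unique) positive semidefinite square root of
`A²`, the matrix `A * X * A` is majorized by `|A| * X * |A|` for every symmetric `X`. -/
theorem quadratic_majorized_absQuadratic {n : ℕ}
    (A X : Matrix (Fin n) (Fin n) ℝ) (hA : A.IsHermitian) (hX : X.IsHermitian)
    (B : Matrix (Fin n) (Fin n) ℝ) (hB : B.PosSemidef) (hB2 : B * B = A ^ 2) :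
    MatMajorizedBy (A * X * A) (B * X * B) := by
  classical
  set U : Matrix (Fin n) (Fin n) ℝ := (hA.eigenvectorUnitary : Matrix (Fin n) (Fin n) ℝ) with hUdef
  set a : Fin n → ℝ := hA.eigenvalues with hadef
  have hU1 : U * star U = 1 := Matrix.mem_unitaryGroup_iff.mp hA.eigenvectorUnitary.2
  have hU2 : star U * U = 1 := Matrix.mem_unitaryGroup_iff'.mp hA.eigenvectorUnitary.2
  have hsp : A = U * diagonal a * star U := by
    have := hA.spectral_theorem
    rwa [RCLike.ofReal_real_eq_id, Function.id_comp] at this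
  -- sign function
  set sg : Fin n → ℝ := fun i => if a i < 0 then -1 else 1 with hsgdef
  have hsga : ∀ i, sg i * |a i| = a i := by
    intro i
    by_cases hi : a i < 0
    · simp [hsgdef, hi, abs_of_neg hi]
    · simp [hsgdef, hi, abs_of_nonneg (not_lt.mp hi)]
  have hasg : ∀ i, |a i| * sg i = a i := fun i => by rw [mul_comm]; exact hsga i
  have hsgsq : ∀ i, sg i * sg i = 1 := by
    intro i; by_cases hi : a i < 0 <;> simp [hsgdef, hi]
  set Bc : Matrix (Fin n) (Fin n) ℝ := U * diagonal (fun i => |a i|) * star U with hBcdef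
  set S : Matrix (Fin n) (Fin n) ℝ := U * diagonal sg * star U with hSdef
  have conj_mul : ∀ d e : Fin n → ℝ,
      (U * diagonal d * star U) * (U * diagonal e * star U) =
        U * diagonal (fun i => d i * e i) * star U := by
    intro d e
    calc (U * diagonal d * star U) * (U * diagonal e * star U)
        = U * (diagonal d * (star U * U) * diagonal e) * star U := by
          simp only [Matrix.mul_assoc]
      _ = U * diagonal (fun i => d i * e i) * star U := by
          rw [hU2, Matrix.mul_one, diagonal_mul_diagonal]
  have hBc_ps : Bc.PosSemidef := by
    have := (posSemidef_diagonal_iff.mpr fun i => abs_nonneg (a i)).mul_mul_conjTranspose_same U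
    rwa [← Matrix.star_eq_conjTranspose] at this
  have hBcsq : Bc * Bc = A ^ 2 := by
    rw [hBcdef, conj_mul, pow_two, hsp, conj_mul]
    have : (fun i => |a i| * |a i|) = fun i => a i * a i :=
      _root_.funext fun i => abs_mul_abs_self (a i)
    rw [this]
  have hBBc : B = Bc := by
    open scoped MatrixOrder in
    rw [← CFC.sqrt_sq B (Matrix.nonneg_iff_posSemidef.mpr hB),
      ← CFC.sqrt_sq Bc (Matrix.nonneg_iff_posSemidef.mpr hBc_ps), pow_two, pow_two, hB2, hBcsq]
  have hSS : S * S = 1 := by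
    rw [hSdef, conj_mul]
    have : (fun i => sg i * sg i) = fun _ => (1 : ℝ) := funext hsgsq
    rw [this, diagonal_one, Matrix.mul_one, hU1]
  have hSB : S * Bc = A := by
    rw [hSdef, hBcdef, conj_mul, hsp]
    exact congrArg (fun D => U * D * star U) (congrArg diagonal (_root_.funext hsga))
  have hBS : Bc * S = A := by
    rw [hSdef, hBcdef, conj_mul, hsp]
    exact congrArg (fun D => U * D * star U) (congrArg diagonal (_root_.funext hasg))
  have hkey : A * X * A = S * (B * X * B) * S := by
    have hkey0 : (S * Bc) * X * (Bc * S) = S * (Bc * X * Bc) * S := by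
      simp only [Matrix.mul_assoc]
    rw [hSB, hBS] at hkey0
    rw [hBBc]
    exact hkey0
  have hAXA : (A * X * A).IsHermitian := by
    have : (A * X * A)ᴴ = A * X * A := by
      rw [conjTranspose_mul, conjTranspose_mul, hA.eq, hX.eq, Matrix.mul_assoc]
    exact this
  have hBXB : (B * X * B).IsHermitian := by
    have : (B * X * B)ᴴ = B * X * B := by
      rw [conjTranspose_mul, conjTranspose_mul, hB.1.eq, hX.eq, Matrix.mul_assoc]
    exact this
  have hcp : (A * X * A).charpoly = (B * X * B).charpoly := by
    rw [hkey]
    exact my_charpoly_mul_conj S S _ hSS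
  have hroots : Multiset.map hAXA.eigenvalues Finset.univ.val =
      Multiset.map hBXB.eigenvalues Finset.univ.val := by
    rw [← my_roots_eq _ hAXA, ← my_roots_eq _ hBXB, hcp]
  obtain ⟨σ, hσ⟩ := my_exists_perm hroots
  exact ⟨hAXA, hBXB, my_vecMaj_of_perm σ hσ⟩
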